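/- Let f : I ⊆ (0,∞) → (0,∞) be differentiable on I°, let a, b ∈ I° with a < b, f' integrable on [a,b], and suppose |f'|^q is s-geometrically convex on [a,b] for some q > 1 and s ∈ (0,1]. If |f'(a)| ≥ 1 and |f'(b)| ≥ 1, then |f(√(ab)) − (1/(ln b − ln a)) ∫_a^b f(x)/x dx| ≤ (1/4) ln(b/a) · ((q−1)/(2q−1))^{1−1/q} · [ a|f'(a)||f'(b)|^{1−s} g₂(θ₃)^{1/q} + b|f'(b)||f'(a)|^{1−s} g₂(θ₄)^{1/q} ]. -/

import Mathlib

open Real MeasureTheory Set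

/-- `g` is `s`-geometrically convex on `J`. -/
def SGeometricallyConvexOn (s : ℝ) (J : Set ℝ) (g : ℝ → ℝ) : Prop :=
  ∀ x ∈ J, ∀ y ∈ J, ∀ t ∈ Set.Icc (0:ℝ) 1,
    g (x ^ t * y ^ (1 - t)) ≤ g x ^ t ^ s * g y ^ (1 - t) ^ s

noncomputable def g₁ (u : ℝ) : ℝ :=
  if u = 1 then 1/2 else (u * Real.log u - u + 1) / (Real.log u) ^ 2

noncomputable def g₂ (u : ℝ) : ℝ :=
  if u = 1 then 1 else (u - 1) / Real.log u

lemma rpow_root_le {X Y q : ℝ} (hX : 0 ≤ X) (hY : 0 ≤ Y) (hq : 0 < q)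
    (h : X ^ q ≤ Y ^ q) : X ≤ Y := by
  by_contra hc
  push_neg at hc
  exact absurd h (not_le.mpr (Real.rpow_lt_rpow hY hc hq))

lemma rpow_le_affine {t s : ℝ} (ht0 : 0 ≤ t) (ht1 : t ≤ 1) (hs0 : 0 < s) (hs1 : s ≤ 1) :
    t ^ s ≤ s * t + 1 - s := by
  have key : 1 + (1/s) * (t ^ s - 1) ≤ (1 + (t ^ s - 1)) ^ (1/s) := by
    apply one_add_mul_self_le_rpow_one_add
    · have : 0 ≤ t ^ s := Real.rpow_nonneg ht0 s
      linarith
    · rw [le_div_iff₀ hs0]; linarith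
  have h2 : (1 + (t ^ s - 1)) ^ (1/s) = t := by
    have : 1 + (t ^ s - 1) = t ^ s := by ring
    rw [this, ← Real.rpow_mul ht0, mul_one_div, div_self (ne_of_gt hs0), Real.rpow_one]
  rw [h2] at key
  have hs' : s ≠ 0 := ne_of_gt hs0
  have : s * (1 + (1/s) * (t ^ s - 1)) ≤ s * t := by
    exact mul_le_mul_of_nonneg_left key hs0.le
  have hexp : s * (1 + (1/s) * (t ^ s - 1)) = s + t ^ s - 1 := by
    field_simp; ring
  nlinarith [this, hexp]

lemma g₂_nonneg {u : ℝ} (hu : 0 < u) : 0 ≤ g₂ u := by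
  unfold g₂
  split_ifs with h
  · norm_num
  · rcases lt_or_gt_of_ne h with h1 | h1
    · have hl : Real.log u < 0 := Real.log_neg hu h1
      have h2 : u - 1 ≤ 0 := by linarith
      exact div_nonneg_iff.mpr (Or.inr ⟨h2, hl.le⟩)
    · have hl : 0 < Real.log u := Real.log_pos h1
      have : 0 ≤ u - 1 := by linarith
      positivity

lemma integral_exp_mul_half (r : ℝ) :
    ∫ u in (0:ℝ)..(1/2), Real.exp (r * u) = (1/2) * g₂ (Real.exp (r/2)) := by
  unfold g₂
  rcases eq_or_ne r 0 with hr | hr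
  · simp [hr]
  · have h1 : Real.exp (r/2) ≠ 1 := by
      rw [Ne, Real.exp_eq_one_iff]
      intro h; exact hr (by linarith)
    rw [if_neg h1, Real.log_exp]
    rw [intervalIntegral.integral_comp_mul_left Real.exp hr, integral_exp]
    simp only [mul_zero, Real.exp_zero, smul_eq_mul]
    field_simp

lemma holder_interval {p q : ℝ} (hpq : Real.HolderConjugate p q) {F G : ℝ → ℝ}
    (hF : Continuous F) (hG : Continuous G) {c d : ℝ} (hcd : c ≤ d)
    (hF0 : ∀ x, 0 ≤ F x) (hG0 : ∀ x, 0 ≤ G x) :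
    ∫ u in c..d, F u * G u ≤
      (∫ u in c..d, F u ^ p) ^ (1/p) * (∫ u in c..d, G u ^ q) ^ (1/q) := by
  rw [intervalIntegral.integral_of_le hcd, intervalIntegral.integral_of_le hcd,
    intervalIntegral.integral_of_le hcd]
  have hfin : IsFiniteMeasure (volume.restrict (Set.Ioc c d)) :=
    ⟨by rw [Measure.restrict_apply_univ]; exact measure_Ioc_lt_top⟩
  have hmem : ∀ (H : ℝ → ℝ), Continuous H → ∀ r : ℝ,
      MemLp H (ENNReal.ofReal r) (volume.restrict (Set.Ioc c d)) := by
    intro H hH r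
    obtain ⟨C, hC⟩ := (isCompact_Icc (a := c) (b := d)).exists_bound_of_continuousOn
      hH.continuousOn
    exact MemLp.of_bound hH.aestronglyMeasurable C
      (ae_restrict_of_forall_mem measurableSet_Ioc
        (fun x hx => hC x (Ioc_subset_Icc_self hx)))
  exact MeasureTheory.integral_mul_le_Lp_mul_Lq_of_nonneg hpq
    (Filter.Eventually.of_forall hF0) (Filter.Eventually.of_forall hG0)
    (hmem F hF p) (hmem G hG q)

lemma heart {q : ℝ} (r : ℝ) (hq : 1 < q) :
    ∫ u in (0:ℝ)..(1/2), u * Real.exp (r * u) ≤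
      (1/4) * (((q-1)/(2*q-1)) ^ (1-1/q)) * (g₂ (Real.exp (q*r/2))) ^ (1/q) := by
  have hq0 : (0:ℝ) < q := by linarith
  have hq1 : (0:ℝ) < q - 1 := by linarith
  set p : ℝ := q / (q - 1) with hp_def
  have hpq : p.HolderConjugate q := (Real.HolderConjugate.conjExponent hq).symm
  have hp1 : 1 < p := hpq.lt
  have hp0 : 0 < p := hpq.pos
  -- step 1: replace u by |u|
  have e0 : ∫ u in (0:ℝ)..(1/2), u * Real.exp (r * u)
      = ∫ u in (0:ℝ)..(1/2), |u| * Real.exp (r * u) := by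
    apply intervalIntegral.integral_congr
    intro x hx
    rw [Set.uIcc_of_le (by norm_num : (0:ℝ) ≤ 1/2)] at hx
    simp [abs_of_nonneg hx.1]
  -- Hölder
  have e1 : ∫ u in (0:ℝ)..(1/2), |u| * Real.exp (r * u) ≤
      (∫ u in (0:ℝ)..(1/2), |u| ^ p) ^ (1/p) *
      (∫ u in (0:ℝ)..(1/2), (Real.exp (r * u)) ^ q) ^ (1/q) :=
    holder_interval hpq continuous_abs (by fun_prop) (by norm_num)
      (fun x => abs_nonneg x) (fun x => (Real.exp_pos _).le)
  -- compute ∫ |u|^p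
  have e2 : ∫ u in (0:ℝ)..(1/2), |u| ^ p = ((1:ℝ)/2) ^ (p+1) / (p+1) := by
    have : ∫ u in (0:ℝ)..(1/2), |u| ^ p = ∫ u in (0:ℝ)..(1/2), u ^ p := by
      apply intervalIntegral.integral_congr
      intro x hx
      rw [Set.uIcc_of_le (by norm_num : (0:ℝ) ≤ 1/2)] at hx
      simp [abs_of_nonneg hx.1]
    rw [this, integral_rpow (Or.inl (by linarith))]
    rw [Real.zero_rpow (by positivity)]
    ring
  -- compute ∫ exp(ru)^q
  have e3 : ∫ u in (0:ℝ)..(1/2), (Real.exp (r * u)) ^ q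
      = (1/2) * g₂ (Real.exp (q*r/2)) := by
    have : ∀ u : ℝ, (Real.exp (r * u)) ^ q = Real.exp ((q*r) * u) := by
      intro u
      rw [← Real.exp_mul]
      ring_nf
    simp_rw [this]
    rw [integral_exp_mul_half]
  set G2 := g₂ (Real.exp (q*r/2)) with hG2_def
  have hG2 : 0 ≤ G2 := g₂_nonneg (Real.exp_pos _)
  -- arithmetic identities
  have hq1' : (q:ℝ) - 1 ≠ 0 := ne_of_gt hq1
  have hp_add : p + 1 = (2*q-1)/(q-1) := by
    rw [hp_def]; field_simp; ring
  have h2q1 : (0:ℝ) < 2*q - 1 := by linarith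
  have hid1 : (q-1)/(2*q-1) = 1/(p+1) := by
    rw [hp_add]; field_simp
  have hid2 : 1 - 1/q = 1/p := by
    rw [hp_def]; field_simp
  have hid3 : (p+1) * (1/p) + 1/q = 2 := by
    rw [hp_def]; field_simp; ring
  -- final computation
  have e4 : (((1:ℝ)/2) ^ (p+1) / (p+1)) ^ (1/p) * ((1/2) * G2) ^ (1/q)
      = (1/4) * (((q-1)/(2*q-1)) ^ (1-1/q)) * G2 ^ (1/q) := by
    rw [hid1, hid2]
    have hpp1 : (0:ℝ) < p + 1 := by linarith
    have A : (((1:ℝ)/2) ^ (p+1) / (p+1)) ^ (1/p)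
        = ((1:ℝ)/2) ^ ((p+1)*(1/p)) * (1/(p+1)) ^ (1/p) := by
      rw [div_eq_mul_one_div, Real.mul_rpow (by positivity) (by positivity),
        ← Real.rpow_mul (by norm_num)]
    have B : (((1:ℝ)/2) * G2) ^ (1/q) = ((1:ℝ)/2) ^ (1/q) * G2 ^ (1/q) :=
      Real.mul_rpow (by norm_num) hG2
    have C : ((1:ℝ)/2) ^ ((p+1)*(1/p)) * ((1:ℝ)/2) ^ (1/q) = 1/4 := by
      rw [← Real.rpow_add (by norm_num : (0:ℝ) < 1/2), hid3,
        show (2:ℝ) = ((2:ℕ):ℝ) by norm_num, Real.rpow_natCast]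
      norm_num
    rw [A, B, ← C]
    ring
  calc ∫ u in (0:ℝ)..(1/2), u * Real.exp (r * u)
      = ∫ u in (0:ℝ)..(1/2), |u| * Real.exp (r * u) := e0
    _ ≤ _ := e1
    _ = (((1:ℝ)/2) ^ (p+1) / (p+1)) ^ (1/p) * ((1/2) * G2) ^ (1/q) := by rw [e2, e3]
    _ = _ := e4

lemma core {q s L : ℝ} (hq : 1 < q) (hs0 : 0 < s) (hs1 : s ≤ 1) (hL : 0 < L)
    {c d α β : ℝ} (hc : 0 < c) (hd : 0 < d) (hα : 1 ≤ α) (hβ : 1 ≤ β) :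
    ∫ u in (0:ℝ)..(1/2), u * (L * (c * Real.exp ((Real.log d - Real.log c) * u)) *
        (α ^ (s*(1-u)+1-s) * β ^ (s*u+1-s))) ≤
      (1/4) * L * (((q-1)/(2*q-1)) ^ (1-1/q)) *
        (c * α * β ^ (1-s) * (g₂ ((d * β ^ s / (c * α ^ s)) ^ (q/2))) ^ (1/q)) := by
  have hα0 : (0:ℝ) < α := lt_of_lt_of_le one_pos hα
  have hβ0 : (0:ℝ) < β := lt_of_lt_of_le one_pos hβ
  set r : ℝ := (Real.log d - Real.log c) + s * (Real.log β - Real.log α) with hr_def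
  set Co : ℝ := L * c * α * β ^ (1-s) with hCo_def
  have hCo : 0 < Co := by positivity
  have key : ∀ u : ℝ, u * (L * (c * Real.exp ((Real.log d - Real.log c) * u)) *
      (α ^ (s*(1-u)+1-s) * β ^ (s*u+1-s))) = Co * (u * Real.exp (r * u)) := by
    intro u
    rw [hCo_def, hr_def]
    rw [Real.rpow_def_of_pos hα0, Real.rpow_def_of_pos hβ0 (s*u+1-s),
      Real.rpow_def_of_pos hβ0 (1-s)]
    nth_rewrite 2 [show α = Real.exp (Real.log α) from (Real.exp_log hα0).symm]
    ring_nf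
    simp only [mul_assoc, ← Real.exp_add]
    ring_nf
  have step1 : ∫ u in (0:ℝ)..(1/2), u * (L * (c * Real.exp ((Real.log d - Real.log c) * u)) *
      (α ^ (s*(1-u)+1-s) * β ^ (s*u+1-s))) = Co * ∫ u in (0:ℝ)..(1/2), u * Real.exp (r * u) := by
    simp_rw [key]
    exact intervalIntegral.integral_const_mul Co _
  have hθ : (d * β ^ s / (c * α ^ s)) ^ (q/2) = Real.exp (q*r/2) := by
    have h1 : (0:ℝ) < d * β ^ s / (c * α ^ s) := by positivity
    rw [Real.rpow_def_of_pos h1]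
    congr 1
    rw [Real.log_div (by positivity) (by positivity), Real.log_mul hd.ne' (by positivity),
      Real.log_mul hc.ne' (by positivity), Real.log_rpow hβ0, Real.log_rpow hα0]
    ring
  rw [step1]
  calc Co * ∫ u in (0:ℝ)..(1/2), u * Real.exp (r * u)
      ≤ Co * ((1/4) * (((q-1)/(2*q-1)) ^ (1-1/q)) *
          (g₂ ((d * β ^ s / (c * α ^ s)) ^ (q/2))) ^ (1/q)) := by
        apply mul_le_mul_of_nonneg_left _ hCo.le
        rw [hθ]; exact heart r hq
    _ = (1/4) * L * (((q-1)/(2*q-1)) ^ (1-1/q)) *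
        (c * α * β ^ (1-s) * (g₂ ((d * β ^ s / (c * α ^ s)) ^ (q/2))) ^ (1/q)) := by
        rw [hCo_def]; ring

set_option maxHeartbeats 1000000 in
theorem stmt_15
    (I : Set ℝ) (hI : I.OrdConnected) (hIpos : I ⊆ Set.Ioi (0:ℝ))
    (f f' : ℝ → ℝ) (hfpos : ∀ x ∈ I, 0 < f x)
    (a b : ℝ) (ha : a ∈ interior I) (hb : b ∈ interior I) (hab : a < b)
    (hdiff : ∀ x ∈ interior I, HasDerivAt f (f' x) x)
    (hint : IntervalIntegrable f' volume a b)
    (q s : ℝ) (hq : 1 < q) (hs : s ∈ Set.Ioc (0:ℝ) 1)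
    (hconv : SGeometricallyConvexOn s (Set.Icc a b) (fun x => |f' x| ^ q))
    (hfa : 1 ≤ |f' a|) (hfb : 1 ≤ |f' b|) :
    |f (Real.sqrt (a * b)) - (1 / (Real.log b - Real.log a)) * ∫ x in a..b, f x / x| ≤
      (1 / 4 : ℝ) * Real.log (b / a) * ((q - 1) / (2 * q - 1)) ^ (1 - 1 / q) *
        (a * |f' a| * |f' b| ^ (1 - s) * (g₂ ((b * |f' b| ^ s / (a * |f' a| ^ s)) ^ (q / 2))) ^ (1 / q)
         + b * |f' b| * |f' a| ^ (1 - s) * (g₂ ((a * |f' a| ^ s / (b * |f' b| ^ s)) ^ (q / 2))) ^ (1 / q)) := by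
  obtain ⟨hs0, hs1⟩ := hs
  have ha0 : (0:ℝ) < a := hIpos (interior_subset ha)
  have hb0 : (0:ℝ) < b := hIpos (interior_subset hb)
  have hq0 : (0:ℝ) < q := by linarith
  set L : ℝ := Real.log b - Real.log a with hL_def
  have hL : 0 < L := sub_pos.mpr (Real.log_lt_log ha0 hab)
  set φ : ℝ → ℝ := fun u => a * Real.exp (L * u) with hφ_def
  have hφpos : ∀ u, 0 < φ u := fun u => by positivity
  have hexpL : Real.exp L = b / a := by
    rw [hL_def, Real.exp_sub, Real.exp_log hb0, Real.exp_log ha0]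
  have hφ0 : φ 0 = a := by simp [hφ_def]
  have hφ1 : φ 1 = b := by
    simp only [hφ_def, mul_one, hexpL]
    field_simp
  have hφhalf : φ (1/2) = Real.sqrt (a * b) := by
    have h2 : (φ (1/2)) ^ 2 = a * b := by
      have : Real.exp (L * (1/2)) ^ 2 = Real.exp L := by
        rw [sq, ← Real.exp_add]; ring_nf
      simp only [hφ_def]
      rw [mul_pow, this, hexpL]
      field_simp
    rw [show a * b = (φ (1/2)) ^ 2 from h2.symm, Real.sqrt_sq (hφpos _).le]
  have hφmono : StrictMono φ := by
    intro u v huv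
    have : L * u < L * v := mul_lt_mul_of_pos_left huv hL
    exact mul_lt_mul_of_pos_left (Real.exp_lt_exp.mpr this) ha0
  have hφc : Continuous φ := by fun_prop
  have hφmem : ∀ u ∈ Icc (0:ℝ) 1, φ u ∈ Icc a b := by
    intro u hu
    constructor
    · rw [← hφ0]; exact (hφmono.monotone hu.1)
    · rw [← hφ1]; exact (hφmono.monotone hu.2)
  -- Icc a b ⊆ interior I
  have hIccI : Icc a b ⊆ interior I := by
    obtain ⟨εa, hεa, hball_a⟩ := Metric.isOpen_iff.mp isOpen_interior a ha
    obtain ⟨εb, hεb, hball_b⟩ := Metric.isOpen_iff.mp isOpen_interior b hb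
    have ha' : a - εa/2 ∈ I := interior_subset (hball_a (by
      simp only [Metric.mem_ball, Real.dist_eq]
      rw [abs_of_nonpos (by linarith : a - εa/2 - a ≤ 0)]; linarith))
    have hb' : b + εb/2 ∈ I := interior_subset (hball_b (by
      simp only [Metric.mem_ball, Real.dist_eq]
      rw [abs_of_nonneg (by linarith : (0:ℝ) ≤ b + εb/2 - b)]; linarith))
    have hIoo : Ioo (a - εa/2) (b + εb/2) ⊆ I :=
      fun x hx => hI.out ha' hb' ⟨hx.1.le, hx.2.le⟩
    intro x hx
    exact interior_maximal hIoo isOpen_Ioo ⟨by linarith [hx.1], by linarith [hx.2]⟩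
  have hφderiv : ∀ u : ℝ, HasDerivAt φ (L * φ u) u := by
    intro u
    have h1 : HasDerivAt (fun y : ℝ => L * y) L u := by
      simpa using (hasDerivAt_id u).const_mul L
    have h2 := ((Real.hasDerivAt_exp (L * u)).comp u h1).const_mul a
    refine h2.congr_deriv ?_
    simp only [hφ_def]; ring
  set F : ℝ → ℝ := fun u => f (φ u) with hF_def
  set Fd : ℝ → ℝ := fun u => f' (φ u) * (L * φ u) with hFd_def
  have hFderiv : ∀ u ∈ Icc (0:ℝ) 1, HasDerivAt F (Fd u) u := by
    intro u hu
    exact (hdiff _ (hIccI (hφmem u hu))).comp u (hφderiv u)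
  have hfc : ContinuousOn f (Icc a b) := by
    intro x hx
    exact ((hdiff x (hIccI hx)).continuousAt).continuousWithinAt
  have hFc : ContinuousOn F (Icc 0 1) :=
    hfc.comp hφc.continuousOn (fun u hu => hφmem u hu)
  have hFint : IntervalIntegrable F volume 0 1 := by
    apply ContinuousOn.intervalIntegrable
    rwa [Set.uIcc_of_le (by norm_num : (0:ℝ) ≤ 1)]
  have himg : φ '' (Icc 0 1) = Icc a b := by
    apply Subset.antisymm
    · rintro _ ⟨u, hu, rfl⟩; exact hφmem u hu
    · have h := intermediate_value_Icc (by norm_num : (0:ℝ) ≤ 1) hφc.continuousOn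
      rw [hφ0, hφ1] at h
      exact h
  have hFdint : IntervalIntegrable Fd volume 0 1 := by
    have h1 : IntegrableOn f' (Icc a b) := by
      rw [← himg]
      exact (intervalIntegrable_iff_integrableOn_Icc_of_le hab.le).mp hint |>.congr_set_ae
        (by rw [himg]; exact Filter.EventuallyEq.rfl)
    have h2 := (integrableOn_image_iff_integrableOn_abs_deriv_smul measurableSet_Icc
      (fun u _ => (hφderiv u).hasDerivWithinAt) (hφmono.injective.injOn)
      f').mp (by rwa [himg])
    rw [intervalIntegrable_iff_integrableOn_Icc_of_le (by norm_num : (0:ℝ) ≤ 1)]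
    apply h2.congr_fun _ measurableSet_Icc
    intro u _
    simp only [smul_eq_mul, hFd_def]
    rw [abs_of_pos (by positivity : 0 < L * φ u)]
    ring
  -- substitution identity
  have hsubst : ∫ x in a..b, f x / x = L * ∫ u in (0:ℝ)..1, F u := by
    have h := intervalIntegral.integral_comp_smul_deriv' (f := φ)
      (f' := fun u => L * φ u) (g := fun x => f x / x) (a := (0:ℝ)) (b := 1)
      (fun u _ => hφderiv u)
      (by fun_prop)
      (by
        rw [Set.uIcc_of_le (by norm_num : (0:ℝ) ≤ 1), himg]
        exact hfc.div continuousOn_id (fun x hx => ne_of_gt (lt_of_lt_of_le ha0 hx.1)))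
    rw [hφ0, hφ1] at h
    rw [← h, ← intervalIntegral.integral_const_mul]
    apply intervalIntegral.integral_congr
    intro u _
    have hne := (hφpos u).ne'
    simp only [smul_eq_mul, Function.comp_apply, hF_def]
    field_simp
  -- integration by parts identities
  have hFd_half1 : IntervalIntegrable Fd volume 0 (1/2) :=
    hFdint.mono_set (by rw [Set.uIcc_of_le (by norm_num : (0:ℝ) ≤ 1/2),
      Set.uIcc_of_le (by norm_num : (0:ℝ) ≤ 1)]; exact Icc_subset_Icc le_rfl (by norm_num))
  have hFd_half2 : IntervalIntegrable Fd volume (1/2) 1 :=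
    hFdint.mono_set (by rw [Set.uIcc_of_le (by norm_num : (1:ℝ)/2 ≤ 1),
      Set.uIcc_of_le (by norm_num : (0:ℝ) ≤ 1)]; exact Icc_subset_Icc (by norm_num) le_rfl)
  have hFint1 : IntervalIntegrable F volume 0 (1/2) :=
    hFint.mono_set (by rw [Set.uIcc_of_le (by norm_num : (0:ℝ) ≤ 1/2),
      Set.uIcc_of_le (by norm_num : (0:ℝ) ≤ 1)]; exact Icc_subset_Icc le_rfl (by norm_num))
  have hFint2 : IntervalIntegrable F volume (1/2) 1 :=
    hFint.mono_set (by rw [Set.uIcc_of_le (by norm_num : (1:ℝ)/2 ≤ 1),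
      Set.uIcc_of_le (by norm_num : (0:ℝ) ≤ 1)]; exact Icc_subset_Icc (by norm_num) le_rfl)
  have ibp1 : ∫ u in (0:ℝ)..(1/2), u * Fd u
      = (1/2) * F (1/2) - 0 * F 0 - ∫ u in (0:ℝ)..(1/2), 1 * F u := by
    apply intervalIntegral.integral_mul_deriv_eq_deriv_mul
    · intro x _; exact hasDerivAt_id x
    · intro x hx
      apply hFderiv
      rw [Set.uIcc_of_le (by norm_num : (0:ℝ) ≤ 1/2)] at hx
      exact ⟨hx.1, by linarith [hx.2]⟩
    · exact intervalIntegrable_const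
    · exact hFd_half1
  have ibp2 : ∫ u in (1/2:ℝ)..1, (u - 1) * Fd u
      = (1 - 1) * F 1 - (1/2 - 1) * F (1/2) - ∫ u in (1/2:ℝ)..1, 1 * F u := by
    apply intervalIntegral.integral_mul_deriv_eq_deriv_mul
    · intro x _; simpa using (hasDerivAt_id x).sub_const 1
    · intro x hx
      apply hFderiv
      rw [Set.uIcc_of_le (by norm_num : (1:ℝ)/2 ≤ 1)] at hx
      exact ⟨by linarith [hx.1], hx.2⟩
    · exact intervalIntegrable_const
    · exact hFd_half2
  have hsplit : ∫ u in (0:ℝ)..1, F u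
      = (∫ u in (0:ℝ)..(1/2), F u) + ∫ u in (1/2:ℝ)..1, F u :=
    (intervalIntegral.integral_add_adjacent_intervals hFint1 hFint2).symm
  have key_id : F (1/2) - ∫ u in (0:ℝ)..1, F u
      = (∫ u in (0:ℝ)..(1/2), u * Fd u) + ∫ u in (1/2:ℝ)..1, (u - 1) * Fd u := by
    rw [hsplit, ibp1, ibp2]
    simp only [one_mul]
    ring
  -- rpow representation of φ
  have hφ_rpow : ∀ u : ℝ, φ u = a ^ (1-u) * b ^ u := by
    intro u
    simp only [hφ_def]
    rw [Real.rpow_def_of_pos ha0, Real.rpow_def_of_pos hb0, hL_def]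
    nth_rewrite 1 [show a = Real.exp (Real.log a) from (Real.exp_log ha0).symm]
    rw [← Real.exp_add, ← Real.exp_add]
    congr 1
    ring
  set D : ℝ → ℝ := fun u => |f' a| ^ (s*(1-u)+1-s) * |f' b| ^ (s*u+1-s) with hD_def
  have hfa0 : (0:ℝ) < |f' a| := lt_of_lt_of_le one_pos hfa
  have hfb0 : (0:ℝ) < |f' b| := lt_of_lt_of_le one_pos hfb
  have hDpos : ∀ u, 0 < D u := by
    intro u; simp only [hD_def]; positivity
  have hDcont : Continuous D := by
    simp only [hD_def]
    have h1 : Continuous fun y : ℝ => |f' a| ^ y :=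
      continuous_iff_continuousAt.mpr (fun x => Real.continuousAt_const_rpow hfa0.ne')
    have h2 : Continuous fun y : ℝ => |f' b| ^ y :=
      continuous_iff_continuousAt.mpr (fun x => Real.continuousAt_const_rpow hfb0.ne')
    exact (h1.comp (by fun_prop)).mul (h2.comp (by fun_prop))
  have hpointwise : ∀ u ∈ Icc (0:ℝ) 1, |f' (φ u)| ≤ D u := by
    intro u hu
    have hc := hconv a ⟨le_rfl, hab.le⟩ b ⟨hab.le, le_rfl⟩ (1-u)
      ⟨by linarith [hu.2], by linarith [hu.1]⟩
    simp only at hc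
    rw [show (1 : ℝ) - (1 - u) = u by ring, ← hφ_rpow u] at hc
    rw [← Real.rpow_mul (abs_nonneg (f' a)), ← Real.rpow_mul (abs_nonneg (f' b))] at hc
    have b1 : |f' a| ^ (q * ((1-u) ^ s)) ≤ |f' a| ^ (q * (s*(1-u)+1-s)) := by
      apply Real.rpow_le_rpow_of_exponent_le hfa
      have := rpow_le_affine (by linarith [hu.2] : (0:ℝ) ≤ 1 - u)
        (by linarith [hu.1] : 1 - u ≤ 1) hs0 hs1
      nlinarith
    have b2 : |f' b| ^ (q * (u ^ s)) ≤ |f' b| ^ (q * (s*u+1-s)) := by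
      apply Real.rpow_le_rpow_of_exponent_le hfb
      have := rpow_le_affine hu.1 hu.2 hs0 hs1
      nlinarith
    have hq_root : |f' (φ u)| ^ q ≤ (D u) ^ q := by
      calc |f' (φ u)| ^ q ≤ |f' a| ^ (q * ((1-u) ^ s)) * |f' b| ^ (q * (u ^ s)) := by
            convert hc using 3 <;> ring
        _ ≤ |f' a| ^ (q * (s*(1-u)+1-s)) * |f' b| ^ (q * (s*u+1-s)) :=
            mul_le_mul b1 b2 (by positivity) (by positivity)
        _ = (D u) ^ q := by
            simp only [hD_def]
            rw [Real.mul_rpow (by positivity) (by positivity),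
              ← Real.rpow_mul (abs_nonneg _), ← Real.rpow_mul (abs_nonneg _),
              mul_comm (s*(1-u)+1-s) q, mul_comm (s*u+1-s) q]
    exact rpow_root_le (abs_nonneg _) (hDpos u).le hq0 hq_root
  -- first half estimate
  have habs1 : |∫ u in (0:ℝ)..(1/2), u * Fd u| ≤
      ∫ u in (0:ℝ)..(1/2), u * (L * (a * Real.exp ((Real.log b - Real.log a) * u)) * D u) := by
    apply (intervalIntegral.abs_integral_le_integral_abs (by norm_num)).trans
    apply intervalIntegral.integral_mono_on (by norm_num)
    · exact (hFd_half1.continuousOn_mul continuousOn_id).abs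
    · exact (continuous_id.mul ((continuous_const.mul (by fun_prop : Continuous
        (fun u : ℝ => a * Real.exp ((Real.log b - Real.log a) * u)))).mul
        hDcont)).intervalIntegrable _ _
    · intro x hx
      rw [abs_mul, abs_of_nonneg hx.1]
      apply mul_le_mul_of_nonneg_left _ hx.1
      simp only [hFd_def]
      rw [abs_mul, abs_of_pos (by positivity : (0:ℝ) < L * φ x)]
      calc |f' (φ x)| * (L * φ x) ≤ D x * (L * φ x) :=
            mul_le_mul_of_nonneg_right
              (hpointwise x ⟨hx.1, by linarith [hx.2]⟩) (by positivity)
        _ = L * (a * Real.exp ((Real.log b - Real.log a) * x)) * D x := by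
            simp only [hφ_def]; rw [← hL_def]; ring
  have hcore1 : ∫ u in (0:ℝ)..(1/2), u * (L * (a * Real.exp ((Real.log b - Real.log a) * u)) * D u)
      ≤ (1/4) * L * (((q-1)/(2*q-1)) ^ (1-1/q)) *
        (a * |f' a| * |f' b| ^ (1-s) *
          (g₂ ((b * |f' b| ^ s / (a * |f' a| ^ s)) ^ (q/2))) ^ (1/q)) := by
    have h := core (s := s) hq hs0 hs1 hL ha0 hb0 hfa hfb
    simpa only [hD_def] using h
  -- second half estimate
  have habs2 : |∫ u in (1/2:ℝ)..1, (u - 1) * Fd u| ≤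
      ∫ u in (1/2:ℝ)..1, (1 - u) * (L * φ u * D u) := by
    apply (intervalIntegral.abs_integral_le_integral_abs (by norm_num)).trans
    apply intervalIntegral.integral_mono_on (by norm_num)
    · exact (hFd_half2.continuousOn_mul (by fun_prop)).abs
    · exact ((continuous_const.sub continuous_id).mul ((continuous_const.mul
        (by fun_prop : Continuous φ)).mul hDcont)).intervalIntegrable _ _
    · intro x hx
      rw [abs_mul, abs_of_nonpos (by linarith [hx.2] : x - 1 ≤ 0)]
      have h1u : (0:ℝ) ≤ 1 - x := by linarith [hx.2]
      rw [show -(x-1) = 1 - x by ring]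
      apply mul_le_mul_of_nonneg_left _ h1u
      simp only [hFd_def]
      rw [abs_mul, abs_of_pos (by positivity : (0:ℝ) < L * φ x)]
      calc |f' (φ x)| * (L * φ x) ≤ D x * (L * φ x) :=
            mul_le_mul_of_nonneg_right
              (hpointwise x ⟨by linarith [hx.1], hx.2⟩) (by positivity)
        _ = L * φ x * D x := by ring
  have hswap : ∫ u in (1/2:ℝ)..1, (1 - u) * (L * φ u * D u)
      = ∫ v in (0:ℝ)..(1/2), v * (L * (b * Real.exp ((Real.log a - Real.log b) * v)) *
          (|f' b| ^ (s*(1-v)+1-s) * |f' a| ^ (s*v+1-s))) := by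
    have h := intervalIntegral.integral_comp_sub_left
      (a := (0:ℝ)) (b := 1/2) (fun u => (1 - u) * (L * φ u * D u)) 1
    norm_num at h
    rw [← h]
    apply intervalIntegral.integral_congr
    intro v _
    simp only [hD_def, hφ_def]
    have hb' : a * Real.exp L = b := by rw [hexpL]; field_simp
    have hφswap : a * Real.exp (L * (1 - v)) = b * Real.exp ((Real.log a - Real.log b) * v) := by
      rw [show L * (1 - v) = L + (-L) * v by ring, Real.exp_add, ← mul_assoc, hb']
      congr 1
      rw [hL_def]; ring
    rw [show (1:ℝ) - (1 - v) = v by ring, hφswap]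
    ring
  have hcore2 : ∫ v in (0:ℝ)..(1/2), v * (L * (b * Real.exp ((Real.log a - Real.log b) * v)) *
        (|f' b| ^ (s*(1-v)+1-s) * |f' a| ^ (s*v+1-s)))
      ≤ (1/4) * L * (((q-1)/(2*q-1)) ^ (1-1/q)) *
        (b * |f' b| * |f' a| ^ (1-s) *
          (g₂ ((a * |f' a| ^ s / (b * |f' b| ^ s)) ^ (q/2))) ^ (1/q)) :=
    core (s := s) hq hs0 hs1 hL hb0 ha0 hfb hfa
  -- final assembly
  have lhs_eq : |f (Real.sqrt (a * b)) - (1 / L) * ∫ x in a..b, f x / x|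
      = |F (1/2) - ∫ u in (0:ℝ)..1, F u| := by
    rw [← hφhalf, hsubst]
    have hcancel : (1:ℝ)/L * (L * ∫ u in (0:ℝ)..1, F u) = ∫ u in (0:ℝ)..1, F u := by
      field_simp
    rw [hcancel]
  rw [lhs_eq, key_id]
  have hlog : Real.log (b / a) = L := by
    rw [Real.log_div hb0.ne' ha0.ne', hL_def]
  rw [hlog]
  calc |(∫ u in (0:ℝ)..(1/2), u * Fd u) + ∫ u in (1/2:ℝ)..1, (u - 1) * Fd u|
      ≤ |∫ u in (0:ℝ)..(1/2), u * Fd u| + |∫ u in (1/2:ℝ)..1, (u - 1) * Fd u| := abs_add_le _ _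
    _ ≤ (1/4) * L * (((q-1)/(2*q-1)) ^ (1-1/q)) *
          (a * |f' a| * |f' b| ^ (1-s) *
            (g₂ ((b * |f' b| ^ s / (a * |f' a| ^ s)) ^ (q/2))) ^ (1/q))
        + (1/4) * L * (((q-1)/(2*q-1)) ^ (1-1/q)) *
          (b * |f' b| * |f' a| ^ (1-s) *
            (g₂ ((a * |f' a| ^ s / (b * |f' b| ^ s)) ^ (q/2))) ^ (1/q)) := by
        apply add_le_add
        · exact habs1.trans hcore1
        · exact (habs2.trans (le_of_eq hswap)).trans hcore2
    _ = _ := by ring
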